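/- For every integer a with 0 ≤ a ≤ N+1 and every u ∈ ℂ, T^a(u+a)·[0,1,…,N](u) = [0,1,…,a−1,a+1,…,N+1](u); that is, T^a(u+a) equals the ratio of Casorati determinants [0,1,…,a−1,a+1,…,N+1](u)/[0,1,…,N](u) whenever the denominator is nonzero. -/

import Mathlib

open Complex

noncomputable def oneSubXD (x w : ℂ → ℂ) : ℂ → ℂ := fun u => w u - x u * w (u + 2)

noncomputable def Lop (x : ℕ → ℂ → ℂ) : ℕ → (ℂ → ℂ) → (ℂ → ℂ)
  | 0 => fun w => w
  | k + 1 => fun w => oneSubXD (x (k + 1)) (Lop x k w)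

noncomputable def casorati (N : ℕ) (w : ℕ → ℂ → ℂ) (idx : ℕ → ℕ) (u : ℂ) : ℂ :=
  Matrix.det (Matrix.of fun j k : Fin (N + 1) => w (j.1 + 1) (u + 2 * (idx k.1 : ℂ)))

open Matrix

lemma lop_zero (x : ℕ → ℂ → ℂ) : ∀ (m : ℕ) (w : ℂ → ℂ) (u : ℂ),
    (∀ j ≤ m, w (u + 2 * j) = 0) → Lop x m w u = 0 := by
  intro m
  induction m with
  | zero =>
    intro w u h
    have := h 0 le_rfl
    simpa [Lop] using this
  | succ m ih =>
    intro w u h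
    show Lop x m w u - x (m+1) u * Lop x m w (u+2) = 0
    rw [ih w u (fun j hj => h j (by omega)), ih w (u+2) ?_]
    · ring
    · intro j hj
      have h2 := h (j+1) (by omega)
      have : u + 2 + 2 * (j : ℂ) = u + 2 * ((j : ℕ) + 1 : ℕ) := by push_cast; ring
      rw [this]
      exact h2

lemma lop_top (x : ℕ → ℂ → ℂ) : ∀ (m : ℕ) (w : ℂ → ℂ) (u : ℂ),
    (∀ j < m, w (u + 2 * j) = 0) →
    Lop x m w u = (-1 : ℂ)^m * (∏ j ∈ Finset.range m, x (m - j) (u + 2 * j)) * w (u + 2 * m) := by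
  intro m
  induction m with
  | zero =>
    intro w u _
    simp [Lop]
  | succ m ih =>
    intro w u h
    show Lop x m w u - x (m+1) u * Lop x m w (u+2) = _
    rw [lop_zero x m w u (fun j hj => h j (by omega)),
        ih w (u+2) (fun j hj => by
          have h2 := h (j+1) (by omega)
          have : u + 2 + 2 * (j : ℂ) = u + 2 * ((j : ℕ) + 1 : ℕ) := by push_cast; ring
          rw [this]; exact h2)]
    rw [Finset.prod_range_succ']
    have harg : ∀ i : ℕ, u + 2 * ((i + 1 : ℕ) : ℂ) = (u + 2) + 2 * i := by
      intro i; push_cast; ring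
    have hprod : ∏ i ∈ Finset.range m, x (m + 1 - (i + 1)) (u + 2 * ((i+1 : ℕ) : ℂ))
        = ∏ i ∈ Finset.range m, x (m - i) ((u + 2) + 2 * i) := by
      apply Finset.prod_congr rfl
      intro i _
      rw [harg i, Nat.succ_sub_succ]
    rw [hprod]
    have hw : (u + 2) + 2 * (m : ℂ) = u + 2 * ((m + 1 : ℕ) : ℂ) := by push_cast; ring
    have h0 : u + 2 * ((0 : ℕ) : ℂ) = u := by push_cast; ring
    rw [Nat.sub_zero, h0, hw]
    ring

lemma prod_telescope_div (h : ℕ → ℂ) : ∀ m, (∀ j ≤ m, h j ≠ 0) →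
    ∏ j ∈ Finset.range m, h j / h (j+1) = h 0 / h m := by
  intro m
  induction m with
  | zero => intro hne; simp [div_self (hne 0 le_rfl)]
  | succ m ih =>
    intro hne
    rw [Finset.prod_range_succ, ih (fun j hj => hne j (by omega)),
        div_mul_div_comm, mul_comm (h 0) (h m), mul_div_mul_left _ _ (hne m (by omega))]

lemma prod_telescope_div' (h : ℕ → ℂ) : ∀ m, (∀ j ≤ m, h j ≠ 0) →
    ∏ j ∈ Finset.range m, h (j+1) / h j = h m / h 0 := by
  intro m
  induction m with
  | zero => intro hne; simp [div_self (hne 0 le_rfl)]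
  | succ m ih =>
    intro hne
    rw [Finset.prod_range_succ, ih (fun j hj => hne j (by omega)),
        div_mul_div_comm, mul_comm (h 0) (h m), mul_div_mul_left _ _ (hne m (by omega))]

lemma exists_move_perm (m : ℕ) (p : Fin (m+1)) :
    ∃ τ : Equiv.Perm (Fin (m+1)),
      Equiv.Perm.sign τ = (-1)^(m - p.1) ∧
      ∀ k : Fin (m+1), (τ k).1 =
        if k.1 < p.1 then k.1 else if k.1 < m then k.1 + 1 else p.1 := by
  have hp : p.1 ≤ m := by omega
  set c : Fin (m+1) := ⟨m - p.1, by omega⟩ with hc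
  set ρ : Equiv.Perm (Fin (m+1)) := Equiv.subRight p with hρ
  refine ⟨ρ.trans ((Fin.cycleRange c).trans ρ.symm), ?_, ?_⟩
  · have h1 : ρ.trans ((Fin.cycleRange c).trans ρ.symm) = ρ⁻¹ * Fin.cycleRange c * ρ := by
      ext k
      simp [Equiv.Perm.mul_apply, Equiv.Perm.inv_def, Equiv.trans_apply]
    rw [h1, _root_.map_mul, _root_.map_mul, _root_.map_inv, Fin.sign_cycleRange]
    rcases Int.units_eq_one_or (Equiv.Perm.sign ρ) with h | h <;> simp [h, hc]
  · intro k
    have hρk : (ρ k).1 = (m + 1 - p.1 + k.1) % (m + 1) := by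
      simp [hρ, Equiv.subRight_apply, Fin.sub_def]
    simp only [Equiv.trans_apply]
    by_cases h1 : k.1 < p.1
    · rw [if_pos h1]
      have hgt : c < ρ k := by
        rw [Fin.lt_def, hρk, Nat.mod_eq_of_lt (by omega)]
        simp only [hc]
        omega
      rw [Fin.cycleRange_of_gt hgt, Equiv.symm_apply_apply]
    · rw [if_neg h1]
      have hv : (ρ k).1 = k.1 - p.1 := by
        rw [hρk]
        have hk : k.1 ≤ m := by omega
        have : m + 1 - p.1 + k.1 = (m + 1) + (k.1 - p.1) := by omega
        rw [this, Nat.add_mod_left, Nat.mod_eq_of_lt (by omega)]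
      by_cases h2 : k.1 < m
      · rw [if_pos h2]
        have hlt : ρ k < c := by
          rw [Fin.lt_def, hv]
          simp only [hc]
          omega
        rw [Fin.cycleRange_of_lt hlt]
        have hone : (1 : Fin (m+1)).1 = 1 := by
          rw [Fin.val_one']
          exact Nat.mod_eq_of_lt (by omega)
        have hadd : (ρ k + 1).1 = k.1 - p.1 + 1 := by
          rw [Fin.add_def]
          simp only [hv, hone]
          rw [Nat.mod_eq_of_lt (by omega)]
        show ((ρ k + 1) + p).1 = k.1 + 1
        rw [Fin.add_def]
        simp only [hadd]
        rw [Nat.mod_eq_of_lt (by omega)]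
        omega
      · rw [if_neg h2]
        have hk : k.1 = m := by omega
        have hrc : ρ k = c := by
          apply Fin.ext
          rw [hv, hk, hc]
        rw [hrc, Fin.cycleRange_self]
        show ((0 : Fin (m+1)) + p).1 = p.1
        rw [Fin.add_def]
        simp [Nat.mod_eq_of_lt p.2]

theorem cramer_A2_even
    (n : ℕ) (hn : 1 ≤ n) (N : ℕ) (hN : N = 2 * n)
    (hbar : ℂ) (hbar_ne : hbar ≠ 0) (s : ℂ)
    (hs : s = (Real.pi : ℂ) * Complex.I / (2 * hbar))
    (Q : ℕ → ℂ → ℂ) (hQ0 : ∀ u, Q 0 u = 1)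
    (hQne : ∀ a, 1 ≤ a → a ≤ n → ∀ u, Q a u ≠ 0)
    (hconst : ℕ → ℂ)
    (hQper : ∀ a, 1 ≤ a → a ≤ n → hconst a ≠ 0 ∧
      ∀ u, Q a (u + (Real.pi : ℂ) * Complex.I / hbar) = hconst a * Q a u)
    (Y : ℕ → ℂ → ℂ) (hY : ∀ a u, Y a u = Q a (u - 1) / Q a (u + 1))
    (x : ℕ → ℂ → ℂ)
    (hxa : ∀ a, 1 ≤ a → a ≤ n → ∀ u : ℂ,
      x a u = Y a (u + a) / Y (a - 1) (u + a + 1))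
    (hx0 : ∀ u : ℂ, x (n + 1) u = Y n (u + n + 1 + s) / Y n (u + n + 2))
    (hxbar : ∀ a, 1 ≤ a → a ≤ n → ∀ u : ℂ,
      x (2 * n - a + 2) u = Y (a - 1) (u + 2 * (n : ℂ) - a + 2 + s)
        / Y a (u + 2 * (n : ℂ) - a + 3 + s))
    (T : ℤ → ℂ → ℂ)
    (hTneg : ∀ a : ℤ, a < 0 → ∀ u, T a u = 0)
    (hTbig : ∀ a : ℤ, (N : ℤ) + 1 < a → ∀ u, T a u = 0)
    (hTL : ∀ w : ℂ → ℂ, ∀ u : ℂ, Lop x (N + 1) w u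
      = ∑ a ∈ Finset.range (N + 2), (-1) ^ a * T a (u + a) * w (u + 2 * a))
    (w : ℕ → ℂ → ℂ)
    (hw : ∀ b, 1 ≤ b → b ≤ N + 1 → ∀ u : ℂ, Lop x (N + 1) (w b) u = 0)
    (hxi : ∀ u : ℂ, casorati N w (fun k => k) u ≠ 0)
    :
    ∀ a : ℕ, a ≤ N + 1 → ∀ u : ℂ,
      T (a : ℤ) (u + a) * casorati N w (fun k => k) u
        = casorati N w (fun k => if k < a then k else k + 1) u := by
  classical
  -- nonvanishing of Y
  have hYne : ∀ b, b ≤ n → ∀ z, Y b z ≠ 0 := by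
    intro b hb z
    rw [hY]
    rcases Nat.eq_zero_or_pos b with rfl | hb1
    · simp [hQ0]
    · exact div_ne_zero (hQne b hb1 hb _) (hQne b hb1 hb _)
  have hY0 : ∀ z, Y 0 z = 1 := by intro z; rw [hY]; simp [hQ0]
  -- the key fact : top coefficient is 1
  have key1 : ∀ v : ℂ, T ((N + 1 : ℕ) : ℤ) (v + ((N + 1 : ℕ) : ℂ)) = 1 := by
    intro v
    have hne2 : (2:ℂ) ≠ 0 := two_ne_zero
    have hxne : ∀ j k : ℕ, j ≠ k → v + 2 * (j:ℂ) ≠ v + 2 * (k:ℂ) := by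
      intro j k hjk h
      apply hjk
      have h1 : (j:ℂ) = k := mul_left_cancel₀ hne2 (add_left_cancel h)
      exact_mod_cast h1
    set w0 : ℂ → ℂ := fun z => if z = v + 2 * ((N + 1 : ℕ) : ℂ) then 1 else 0 with hw0
    have hzero : ∀ j, j < N + 1 → w0 (v + 2 * (j:ℕ)) = 0 := by
      intro j hj
      simp only [hw0]
      rw [if_neg (hxne j (N+1) (by omega))]
    have hRHS := hTL w0 v
    rw [lop_top x (N+1) w0 v hzero] at hRHS
    rw [Finset.sum_range_succ] at hRHS
    have hsum0 : ∑ c ∈ Finset.range (N+1), (-1:ℂ)^c * T c (v + c) * w0 (v + 2*c) = 0 := by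
      apply Finset.sum_eq_zero
      intro c hc
      rw [Finset.mem_range] at hc
      rw [hzero c hc, mul_zero]
    rw [hsum0, zero_add] at hRHS
    have hw0last : w0 (v + 2 * ((N+1 : ℕ):ℂ)) = 1 := by simp [hw0]
    rw [hw0last, mul_one, mul_one] at hRHS
    have hTP := mul_left_cancel₀ (pow_ne_zero (N+1) (by norm_num : (-1:ℂ) ≠ 0)) hRHS
    rw [← hTP]
    -- now evaluate the product
    set hf : ℕ → ℂ := fun b => Y b (v + 2 * (n:ℂ) + (b:ℂ) + 1 + s) with hhf
    set gf : ℕ → ℂ := fun b => Y b (v + 4 * (n:ℂ) + 2 - (b:ℂ)) with hgf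
    have hfne : ∀ j, j ≤ n → hf j ≠ 0 := fun j hj => hYne j hj _
    have hgne : ∀ j, j ≤ n → gf j ≠ 0 := fun j hj => hYne j hj _
    have hsplit : N + 1 = n + (n+1) := by omega
    rw [hsplit, Finset.prod_range_add, Finset.prod_range_succ']
    have hF1 : ∏ j ∈ Finset.range n, x (n + (n+1) - j) (v + 2*(j:ℂ)) = hf 0 / hf n := by
      rw [Finset.prod_congr rfl (fun j hj => ?_), prod_telescope_div hf n (fun j hj => hfne j hj)]
      rw [Finset.mem_range] at hj
      have hidx : n + (n+1) - j = 2*n - (j+1) + 2 := by omega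
      rw [hidx, hxbar (j+1) (by omega) (by omega)]
      have e1 : Y (j+1-1) (v + 2*(j:ℂ) + 2*(n:ℂ) - ((j+1 : ℕ):ℂ) + 2 + s) = hf j := by
        simp only [hhf, Nat.add_sub_cancel]
        congr 1 <;> (try push_cast) <;> (try ring)
      have e2 : Y (j+1) (v + 2*(j:ℂ) + 2*(n:ℂ) - ((j+1:ℕ):ℂ) + 3 + s) = hf (j+1) := by
        simp only [hhf]
        congr 1 <;> (try push_cast) <;> (try ring)
      rw [e1, e2]
    have hMid : x (n + (n+1) - (n + 0)) (v + 2*((n + 0 : ℕ):ℂ)) = hf n / gf n := by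
      have hidx : n + (n+1) - (n + 0) = n + 1 := by omega
      rw [hidx, hx0]
      have e1 : Y n (v + 2*((n + 0 : ℕ):ℂ) + (n:ℂ) + 1 + s) = hf n := by
        simp only [hhf]
        congr 1 <;> (try push_cast) <;> (try ring)
      have e2 : Y n (v + 2*((n + 0 : ℕ):ℂ) + (n:ℂ) + 2) = gf n := by
        simp only [hgf]
        congr 1 <;> (try push_cast) <;> (try ring)
      rw [e1, e2]
    have hF3 : ∏ i ∈ Finset.range n, x (n + (n+1) - (n + (i+1))) (v + 2*((n + (i+1) : ℕ):ℂ))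
        = gf n / gf 0 := by
      have hstep : ∀ i ∈ Finset.range n,
          x (n + (n+1) - (n + (i+1))) (v + 2*((n + (i+1) : ℕ):ℂ))
            = gf ((n-1-i) + 1) / gf (n-1-i) := by
        intro i hi
        rw [Finset.mem_range] at hi
        have hidx : n + (n+1) - (n + (i+1)) = n - i := by omega
        rw [hidx, hxa (n-i) (by omega) (by omega)]
        have e1 : Y (n-i) (v + 2*((n + (i+1) : ℕ):ℂ) + ((n-i : ℕ):ℂ)) = gf ((n-1-i)+1) := by
          have hj : (n-1-i)+1 = n-i := by omega
          rw [hj]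
          simp only [hgf]
          congr 1 <;> (try push_cast [Nat.cast_sub (by omega : i ≤ n)]) <;> (try ring)
        have e2 : Y ((n-i) - 1) (v + 2*((n + (i+1) : ℕ):ℂ) + ((n-i : ℕ):ℂ) + 1) = gf (n-1-i) := by
          have hj : (n-i) - 1 = n-1-i := by omega
          rw [hj]
          simp only [hgf]
          congr 1 <;> (try push_cast [Nat.cast_sub (show i ≤ n by omega), Nat.cast_sub (show i ≤ n - 1 by omega), Nat.cast_sub (show 1 ≤ n by omega)]) <;> (try ring)
        rw [e1, e2]
      have hrefl : (∏ i ∈ Finset.range n, (gf ((n-1-i) + 1) / gf (n-1-i)))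
          = ∏ j ∈ Finset.range n, gf (j+1) / gf j :=
        Finset.prod_range_reflect (fun j => gf (j+1) / gf j) n
      rw [Finset.prod_congr rfl hstep, hrefl,
          prod_telescope_div' gf n (fun j hj => hgne j hj)]
    rw [hF1, hMid, hF3]
    have hf0 : hf 0 = 1 := by simp only [hhf]; rw [hY0]
    have hg0 : gf 0 = 1 := by simp only [hgf]; rw [hY0]
    rw [hf0, hg0]
    field_simp
    exact div_self (mul_ne_zero (hfne n le_rfl) (hgne n le_rfl))
  -- main argument
  intro a ha u
  by_cases hcase : a = N + 1
  · subst hcase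
    have h2 : casorati N w (fun k => if k < N+1 then k else k + 1) u
        = casorati N w (fun k => k) u := by
      simp only [casorati]
      congr 1
      ext j k
      simp only [Matrix.of_apply]
      rw [if_pos k.2]
    rw [h2, key1 u, one_mul]
  · have haN : a ≤ N := by omega
    set p : Fin (N+1) := ⟨a, by omega⟩ with hp
    set A : Matrix (Fin (N+1)) (Fin (N+1)) ℂ :=
      Matrix.of (fun j k : Fin (N+1) => w (j.1+1) (u + 2*(k.1:ℂ))) with hA
    set v : Fin (N+1) → ℂ := fun j => w (j.1+1) (u + 2*(((N+1 : ℕ)):ℂ)) with hv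
    set cvec : Fin (N+1) → ℂ := fun k => (-1:ℂ)^(k.1) * T (k.1 : ℤ) (u + (k.1:ℂ)) with hcvec
    have hcasA : casorati N w (fun k => k) u = A.det := by
      simp only [casorati, hA]
    have hdetA : A.det ≠ 0 := by
      rw [← hcasA]; exact hxi u
    have hrel : A *ᵥ cvec = ((-1:ℂ))^N • v := by
      funext j
      have hb := hw (j.1+1) (by omega) (by omega) u
      rw [hTL] at hb
      rw [Finset.sum_range_succ] at hb
      have hsum : (A *ᵥ cvec) j
          = ∑ c ∈ Finset.range (N+1), (-1:ℂ)^c * T (c:ℤ) (u + (c:ℂ)) * w (j.1+1) (u + 2*(c:ℂ)) := by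
        calc ∑ k : Fin (N+1), A j k * cvec k
            = ∑ k : Fin (N+1),
              (fun c : ℕ => (-1:ℂ)^c * T (c:ℤ) (u + (c:ℂ)) * w (j.1+1) (u + 2*(c:ℂ))) k.1 :=
              Finset.sum_congr rfl (fun k _ => by
                simp only [hA, hcvec, Matrix.of_apply]
                ring)
          _ = _ := Fin.sum_univ_eq_sum_range
              (fun c : ℕ => (-1:ℂ)^c * T (c:ℤ) (u + (c:ℂ)) * w (j.1+1) (u + 2*(c:ℂ))) (N+1)
      rw [hsum, eq_neg_of_add_eq_zero_left hb, key1 u, Pi.smul_apply, smul_eq_mul]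
      simp only [hv]
      ring
    have hU : IsUnit A.det := isUnit_iff_ne_zero.mpr hdetA
    have hcr : A.det • cvec = Matrix.cramer A (((-1:ℂ))^N • v) := by
      have h1 : A *ᵥ Matrix.cramer A (((-1:ℂ))^N • v) = A *ᵥ (A.det • cvec) := by
        rw [Matrix.mulVec_cramer, Matrix.mulVec_smul, hrel]
      have h2 := congrArg (fun z => A⁻¹ *ᵥ z) h1
      simpa [Matrix.mulVec_mulVec, Matrix.nonsing_inv_mul A hU, Matrix.one_mulVec] using h2.symm
    have hpval : p.1 = a := rfl
    have hcv : cvec p = (-1:ℂ)^a * T (a:ℤ) (u + (a:ℂ)) := rfl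
    have hcp : A.det * cvec p = (-1:ℂ)^N * (A.updateCol p v).det := by
      have h3 := congrFun hcr p
      rw [Pi.smul_apply, smul_eq_mul] at h3
      rw [h3, Matrix.cramer_apply, Matrix.det_updateCol_smul]
    obtain ⟨τ, hsign, hτ⟩ := exists_move_perm N p
    set B : Matrix (Fin (N+1)) (Fin (N+1)) ℂ :=
      Matrix.of (fun j k : Fin (N+1) =>
        w (j.1+1) (u + 2*(((if k.1 < a then k.1 else k.1+1) : ℕ):ℂ))) with hB
    have hcasB : casorati N w (fun k => if k < a then k else k + 1) u = B.det := by
      simp only [casorati, hB]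
    have hBsub : B = (A.updateCol p v).submatrix id τ := by
      ext j k
      simp only [hB, Matrix.of_apply, Matrix.submatrix_apply, id_eq, Matrix.updateCol_apply]
      have hτk := hτ k
      rw [hpval] at hτk
      by_cases h1 : k.1 < a
      · rw [if_pos h1]
        rw [if_pos h1] at hτk
        have hne : ¬ (τ k = p) := by
          intro h
          rw [h, hpval] at hτk
          omega
        rw [if_neg hne]
        simp only [hA, Matrix.of_apply, hτk]
      · rw [if_neg h1]
        rw [if_neg h1] at hτk
        by_cases h2 : k.1 < N
        · rw [if_pos h2] at hτk
          have hne : ¬ (τ k = p) := by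
            intro h
            rw [h, hpval] at hτk
            omega
          rw [if_neg hne]
          simp only [hA, Matrix.of_apply, hτk]
        · rw [if_neg h2] at hτk
          have heq : τ k = p := by
            apply Fin.ext
            rw [hτk, hpval]
          rw [if_pos heq]
          simp only [hv]
          have hkN : k.1 + 1 = N + 1 := by omega
          rw [hkN]
    have hdetB : B.det = (-1:ℂ)^(N - a) * (A.updateCol p v).det := by
      rw [hBsub, Matrix.det_permute' τ, hsign, hpval]
      norm_num
    have hDup : (A.updateCol p v).det = (-1:ℂ)^N * (A.det * cvec p) := by
      rw [hcp, ← mul_assoc, ← pow_add]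
      have hNN : (-1:ℂ)^(N+N) = 1 := by
        rw [show N+N = 2*N by ring, pow_mul]
        norm_num
      rw [hNN, one_mul]
    rw [hcasA, hcasB, hdetB, hDup, hcv]
    have hpow : (-1:ℂ)^(N-a) * ((-1:ℂ)^N * (-1:ℂ)^a) = 1 := by
      rw [← pow_add, ← pow_add, show N - a + (N + a) = 2*N by omega, pow_mul]
      norm_num
    linear_combination -A.det * T (a:ℤ) (u + (a:ℂ)) * hpow
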